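/- Let I = (b_i : i<ω) be an indiscernible set over A and C ⊇ A. Then the average type Av(I, C) is definable over ∪I; specifically, for each formula φ(x,y), letting k = k_φ be the NIP bound, φ(x,c) ∈ Av(I,C) if and only if ⊨ ⋁_{u ⊆ 2k, |u|=k} ⋀_{i ∈ u} φ(b_i, c). -/

import Mathlib

open FirstOrder Cardinal

universe u

variable {L : FirstOrder.Language.{u, u}} {M : Type u} [L.Structure M]

/-- A formula in `m` free variables together with a tuple of parameters from `M`. -/
structure PFormula (L : FirstOrder.Language.{u, u}) (M : Type u) [L.Structure M] (m : ℕ) where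
  n : ℕ
  toFormula : L.Formula (Fin m ⊕ Fin n)
  par : Fin n → M

namespace PFormula

variable {m : ℕ}

/-- Realization of a parametrized formula by an `m`-tuple. -/
def Realize (ψ : PFormula L M m) (a : Fin m → M) : Prop :=
  ψ.toFormula.Realize (Sum.elim a ψ.par)

/-- Realization of a parametrized formula in one variable by an element. -/
def Realize1 (ψ : PFormula L M 1) (a : M) : Prop :=
  ψ.Realize fun _ => a

/-- Negation of a parametrized formula. -/
def not (ψ : PFormula L M m) : PFormula L M m :=
  ⟨ψ.n, ψ.toFormula.not, ψ.par⟩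

/-- The parameters of `ψ` all lie in `B`. -/
def Over (ψ : PFormula L M m) (B : Set M) : Prop :=
  ∀ i, ψ.par i ∈ B

end PFormula

/-- Two tuples have the same type over the parameter set `A`. -/
def SameTypeOver (L : FirstOrder.Language.{u, u}) {M : Type u} [L.Structure M]
    (A : Set M) {γ : Type} (b c : γ → M) : Prop :=
  ∀ (k : ℕ) (φ : L.Formula (γ ⊕ Fin k)) (a : Fin k → M),
    (∀ i, a i ∈ A) → (φ.Realize (Sum.elim b a) ↔ φ.Realize (Sum.elim c a))

/-- A sequence of `d`-tuples, indexed by a linear order, is indiscernible over `A`. -/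
def IndiscTupleSeqOver (L : FirstOrder.Language.{u, u}) {M : Type u} [L.Structure M]
    (A : Set M) {ι : Type*} [LinearOrder ι] {d : ℕ} (f : ι → Fin d → M) : Prop :=
  ∀ (n : ℕ) (s t : Fin n → ι), StrictMono s → StrictMono t →
    SameTypeOver L A (fun q : Fin n × Fin d => f (s q.1) q.2)
      (fun q : Fin n × Fin d => f (t q.1) q.2)

/-- A sequence of elements, indexed by a linear order, is indiscernible over `A`. -/
def IndiscSeqOver (L : FirstOrder.Language.{u, u}) {M : Type u} [L.Structure M]
    (A : Set M) {ι : Type*} [LinearOrder ι] (f : ι → M) : Prop :=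
  ∀ (n : ℕ) (s t : Fin n → ι), StrictMono s → StrictMono t →
    SameTypeOver L A (fun i => f (s i)) (fun i => f (t i))

/-- A family of elements is an indiscernible *set* over `A`: the type of a tuple of
distinct elements depends only on its length. -/
def IndiscSetOver (L : FirstOrder.Language.{u, u}) {M : Type u} [L.Structure M]
    (A : Set M) {ι : Type*} (f : ι → M) : Prop :=
  ∀ (n : ℕ) (s t : Fin n → ι), Function.Injective s → Function.Injective t →
    SameTypeOver L A (fun i => f (s i)) (fun i => f (t i))

/-- `p` is a complete consistent `m`-type over `B`: all parameters come from `B`, for each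
formula over `B` it contains the formula or its negation, and every finite subset is
realized (in the monster). -/
def IsTypeOver {m : ℕ} (p : Set (PFormula L M m)) (B : Set M) : Prop :=
  (∀ ψ ∈ p, ψ.Over B) ∧
  (∀ ψ : PFormula L M m, ψ.Over B → ψ ∈ p ∨ ψ.not ∈ p) ∧
  (∀ s : Finset (PFormula L M m), ↑s ⊆ p → ∃ a : Fin m → M, ∀ ψ ∈ s, ψ.Realize a)

/-- `p` is finitely satisfiable in `A`: every finite subset of `p` is realized by a tuple
from `A`. -/
def FinSatIn {m : ℕ} (p : Set (PFormula L M m)) (A : Set M) : Prop :=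
  ∀ s : Finset (PFormula L M m), ↑s ⊆ p →
    ∃ a : Fin m → M, (∀ i, a i ∈ A) ∧ ∀ ψ ∈ s, ψ.Realize a

/-- The complete type of an element `a` over the set `C`. -/
def tpOver (L : FirstOrder.Language.{u, u}) {M : Type u} [L.Structure M]
    (a : M) (C : Set M) : Set (PFormula L M 1) :=
  {ψ | ψ.Over C ∧ ψ.Realize1 a}

/-- `p` (a type with parameters in `B`) does not split over `A`. -/
def DoesNotSplitOver {m : ℕ} (p : Set (PFormula L M m)) (B A : Set M) : Prop :=
  ∀ (n : ℕ) (b c : Fin n → M) (φ : L.Formula (Fin m ⊕ Fin n)),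
    (∀ i, b i ∈ B) → (∀ i, c i ∈ B) → SameTypeOver L A b c →
    ((⟨n, φ, b⟩ : PFormula L M m) ∈ p ↔ (⟨n, φ, c⟩ : PFormula L M m) ∈ p)

/-- `p` (a type over `B`) is definable over `A`. -/
def DefinableOver {m : ℕ} (p : Set (PFormula L M m)) (B A : Set M) : Prop :=
  ∀ (n : ℕ) (φ : L.Formula (Fin m ⊕ Fin n)),
    ∃ (k : ℕ) (d : L.Formula (Fin n ⊕ Fin k)) (e : Fin k → M), (∀ i, e i ∈ A) ∧
      ∀ b : Fin n → M, (∀ i, b i ∈ B) →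
        ((⟨n, φ, b⟩ : PFormula L M m) ∈ p ↔ d.Realize (Sum.elim b e))

/-- The parametrized formula `ψ` divides over `A`. -/
def PFormula.Divides {m : ℕ} (ψ : PFormula L M m) (A : Set M) : Prop :=
  ∃ (f : ℕ → Fin ψ.n → M) (k : ℕ), 0 < k ∧ f 0 = ψ.par ∧ IndiscTupleSeqOver L A f ∧
    ∀ s : Finset ℕ, s.card = k →
      ¬ ∃ a : Fin m → M, ∀ i ∈ s, ψ.toFormula.Realize (Sum.elim a (f i))

/-- The (partial) type `p` forks over `A`: some finite subset of `p` implies a finite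
disjunction of formulas each of which divides over `A`. -/
def ForksOver {m : ℕ} (p : Set (PFormula L M m)) (A : Set M) : Prop :=
  ∃ (r : ℕ) (ψs : Fin r → PFormula L M m), (∀ j, (ψs j).Divides A) ∧
    ∃ s : Finset (PFormula L M m), ↑s ⊆ p ∧
      ∀ a : Fin m → M, (∀ χ ∈ s, χ.Realize a) → ∃ j, (ψs j).Realize a

/-- `p` splits strongly over `A`. -/
def SplitsStronglyOver {m : ℕ} (p : Set (PFormula L M m)) (A : Set M) : Prop :=
  ∃ (n : ℕ) (f : ℕ → Fin n → M) (φ : L.Formula (Fin m ⊕ Fin n)),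
    IndiscTupleSeqOver L A f ∧
    (⟨n, φ, f 0⟩ : PFormula L M m) ∈ p ∧ (PFormula.not ⟨n, φ, f 1⟩ : PFormula L M m) ∈ p

/-- Two tuples are of Lascar distance one over `A`: they lie on a common
`A`-indiscernible sequence. -/
def LascarDistOne (L : FirstOrder.Language.{u, u}) {M : Type u} [L.Structure M]
    (A : Set M) {n : ℕ} (b c : Fin n → M) : Prop :=
  ∃ f : ℕ → Fin n → M, IndiscTupleSeqOver L A f ∧ ∃ i j : ℕ, f i = b ∧ f j = c

/-- Two tuples have the same Lascar strong type over `A` (finite Lascar distance). -/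
def SameLstp (L : FirstOrder.Language.{u, u}) {M : Type u} [L.Structure M]
    (A : Set M) {n : ℕ} (b c : Fin n → M) : Prop :=
  Relation.ReflTransGen (fun x y => LascarDistOne L A x y) b c

/-- `p` (a type over `B`) Lascar-splits over `A`. -/
def LascarSplitsOver {m : ℕ} (p : Set (PFormula L M m)) (B A : Set M) : Prop :=
  ∃ (n : ℕ) (b c : Fin n → M) (φ : L.Formula (Fin m ⊕ Fin n)),
    (∀ i, b i ∈ B) ∧ (∀ i, c i ∈ B) ∧ SameLstp L A b c ∧
    (⟨n, φ, b⟩ : PFormula L M m) ∈ p ∧ (PFormula.not ⟨n, φ, c⟩ : PFormula L M m) ∈ p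

/-- The structure `M` is NIP ("dependent"): no formula alternates infinitely often on an
indiscernible sequence. -/
def IsNIP (L : FirstOrder.Language.{u, u}) (M : Type u) [L.Structure M] : Prop :=
  ∀ (d k : ℕ) (φ : L.Formula (Fin d ⊕ Fin k)) (f : ℕ → Fin d → M) (c : Fin k → M),
    IndiscTupleSeqOver L (∅ : Set M) f →
    ¬ ({i : ℕ | φ.Realize (Sum.elim (f i) c)}.Infinite ∧
        {i : ℕ | ¬ φ.Realize (Sum.elim (f i) c)}.Infinite)

/-- The subset `N` of the monster is `κ`-saturated: every type over a subset of `N` of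
size `< κ` which is finitely satisfiable is realized inside `N`. -/
def SetSaturated (L : FirstOrder.Language.{u, u}) {M : Type u} [L.Structure M]
    (N : Set M) (κ : Cardinal.{u}) : Prop :=
  ∀ C : Set M, C ⊆ N → #C < κ → ∀ (m : ℕ) (p : Set (PFormula L M m)),
    (∀ ψ ∈ p, ψ.Over C) →
    (∀ s : Finset (PFormula L M m), ↑s ⊆ p → ∃ a : Fin m → M, ∀ ψ ∈ s, ψ.Realize a) →
    ∃ a : Fin m → M, (∀ i, a i ∈ N) ∧ ∀ ψ ∈ p, ψ.Realize a

/-- `M` is a monster model: it is saturated in every cardinality below `#M`. -/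
def IsMonster (L : FirstOrder.Language.{u, u}) (M : Type u) [L.Structure M] : Prop :=
  ∀ κ : Cardinal.{u}, κ < #M → SetSaturated L (Set.univ : Set M) κ

/-- The average type of an `ω`-indexed indiscernible set over `C`: formulas over `C` true
of all but finitely many elements of the set. -/
def AvSet (L : FirstOrder.Language.{u, u}) {M : Type u} [L.Structure M]
    (f : ℕ → M) (C : Set M) : Set (PFormula L M 1) :=
  {ψ | ψ.Over C ∧ {i : ℕ | ¬ ψ.Realize1 (f i)}.Finite}

/-- The average type of an endless indiscernible sequence over `C`: formulas over `C`
true of all sufficiently late elements of the sequence. -/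
def AvSeq (L : FirstOrder.Language.{u, u}) {M : Type u} [L.Structure M]
    {ι : Type*} [LinearOrder ι] (f : ι → M) (C : Set M) : Set (PFormula L M 1) :=
  {ψ | ψ.Over C ∧ ∃ i₀ : ι, ∀ i ≥ i₀, ψ.Realize1 (f i)}

/-- The algebraic closure of `A` in `M`. -/
def aclSet (L : FirstOrder.Language.{u, u}) {M : Type u} [L.Structure M]
    (A : Set M) : Set M :=
  {a | ∃ ψ : PFormula L M 1, ψ.Over A ∧ ψ.Realize1 a ∧ {x : M | ψ.Realize1 x}.Finite}

/-- `p ∈ S(A)` is generically stable: there is a nonforking sequence of realizations of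
`p` over `A` which is an indiscernible set. -/
def GenericallyStable (p : Set (PFormula L M 1)) (A : Set M) : Prop :=
  ∃ f : ℕ → M,
    (∀ i, ∀ ψ ∈ p, ψ.Realize1 (f i)) ∧
    IndiscSetOver L A f ∧
    ∀ i : ℕ, ¬ ForksOver (tpOver L (f i) (A ∪ f '' {j | j < i})) A

/-- The Boolean algebra of `B`-definable subsets of `A^m`. -/
def DefSub (L : FirstOrder.Language.{u, u}) {M : Type u} [L.Structure M]
    (A B : Set M) (m : ℕ) : Set (Set (Fin m → M)) :=
  {S | ∃ ψ : PFormula L M m, ψ.Over B ∧ S = {a | (∀ i, a i ∈ A) ∧ ψ.Realize a}}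

/-- An ultrafilter on the Boolean algebra of `B`-definable subsets of `A^m`. -/
structure UltraOn (L : FirstOrder.Language.{u, u}) {M : Type u} [L.Structure M]
    (A B : Set M) (m : ℕ) where
  sets : Set (Set (Fin m → M))
  subset_def : sets ⊆ DefSub L A B m
  inter_mem : ∀ S ∈ sets, ∀ T ∈ sets, S ∩ T ∈ sets
  superset_mem : ∀ S ∈ sets, ∀ T ∈ DefSub L A B m, S ⊆ T → T ∈ sets
  nonempty_mem : ∀ S ∈ sets, S.Nonempty
  ultra : ∀ S ∈ DefSub L A B m,
    S ∈ sets ∨ ({a : Fin m → M | ∀ i, a i ∈ A} \ S) ∈ sets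

/-- The average type of an ultrafilter on `Def_m(A,B)` over `B`. -/
def AvU {A B : Set M} {m : ℕ} (U : UltraOn L A B m) : Set (PFormula L M m) :=
  {ψ | ψ.Over B ∧ {a : Fin m → M | (∀ i, a i ∈ A) ∧ ψ.Realize a} ∈ U.sets}

/-- The average type of an indiscernible set `I = (b_i : i<ω)` over
`C ⊇ A` is definable over `∪I`: for each formula `φ(x,y)` with NIP alternation bound
`k`, `φ(x,c) ∈ Av(I,C)` iff at least `k` among `b_0, …, b_{2k-1}` satisfy `φ(b_i,c)`. -/
theorem average_definable_over_sequence
    (hNIP : IsNIP L M) (A C : Set M) (hAC : A ⊆ C)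
    (f : ℕ → M) (hinj : Function.Injective f) (hset : IndiscSetOver L A f)
    (n : ℕ) (φ : L.Formula (Fin 1 ⊕ Fin n)) (k : ℕ)
    (hk : ∀ c : Fin n → M,
      {i : ℕ | φ.Realize (Sum.elim (fun _ => f i) c)}.encard < (k : ℕ∞) ∨
      {i : ℕ | ¬ φ.Realize (Sum.elim (fun _ => f i) c)}.encard < (k : ℕ∞))
    (c : Fin n → M) (hc : ∀ i, c i ∈ C) :
    (⟨n, φ, c⟩ : PFormula L M 1) ∈ AvSet L f C ↔
      ∃ u : Finset ℕ, u ⊆ Finset.range (2 * k) ∧ u.card = k ∧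
        ∀ i ∈ u, φ.Realize (Sum.elim (fun _ => f i) c) := by
  classical
  have mem_iff : (⟨n, φ, c⟩ : PFormula L M 1) ∈ AvSet L f C ↔
      ((∀ i, c i ∈ C) ∧ {i : ℕ | ¬ φ.Realize (Sum.elim (fun _ => f i) c)}.Finite) := by
    simp [AvSet, PFormula.Over, PFormula.Realize1, PFormula.Realize]
  rw [mem_iff]
  constructor
  · rintro ⟨-, hfin⟩
    have hright : {i : ℕ | ¬ φ.Realize (Sum.elim (fun _ => f i) c)}.encard < (k : ℕ∞) := by
      rcases hk c with h | h
      · exfalso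
        have h1 : {i : ℕ | φ.Realize (Sum.elim (fun _ => f i) c)}.Finite :=
          Set.encard_lt_top_iff.mp (h.trans_le le_top)
        have hsub : (Set.univ : Set ℕ) ⊆
            {i : ℕ | φ.Realize (Sum.elim (fun _ => f i) c)} ∪
            {i : ℕ | ¬ φ.Realize (Sum.elim (fun _ => f i) c)} := by
          intro i _
          by_cases hi : φ.Realize (Sum.elim (fun _ => f i) c)
          · exact Or.inl hi
          · exact Or.inr hi
        exact Set.infinite_univ ((h1.union hfin).subset hsub)
      · exact h
    set s := (Finset.range (2 * k)).filter
      (fun i => ¬ φ.Realize (Sum.elim (fun _ => f i) c)) with hs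
    have hscard : s.card < k := by
      have hsub : (↑s : Set ℕ) ⊆ {i : ℕ | ¬ φ.Realize (Sum.elim (fun _ => f i) c)} := by
        intro i hi
        simp only [hs, Finset.coe_filter, Set.mem_setOf_eq] at hi
        exact hi.2
      have := (Set.encard_mono hsub).trans_lt hright
      rw [Set.encard_coe_eq_coe_finsetCard] at this
      exact_mod_cast this
    set t := (Finset.range (2 * k)).filter
      (fun i => φ.Realize (Sum.elim (fun _ => f i) c)) with ht
    have hsum : t.card + s.card = 2 * k := by
      rw [ht, hs]
      have := Finset.card_filter_add_card_filter_not
        (s := Finset.range (2 * k))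
        (p := fun i => φ.Realize (Sum.elim (fun _ => f i) c))
      simpa using this
    have hkt : k ≤ t.card := by omega
    obtain ⟨u, hu, hucard⟩ := Finset.exists_subset_card_eq hkt
    refine ⟨u, hu.trans (Finset.filter_subset _ _), hucard, fun i hi => ?_⟩
    have := hu hi
    rw [ht, Finset.mem_filter] at this
    exact this.2
  · rintro ⟨u, hu, hucard, hall⟩
    refine ⟨hc, ?_⟩
    rcases hk c with h | h
    · exfalso
      have hsub : (↑u : Set ℕ) ⊆ {i : ℕ | φ.Realize (Sum.elim (fun _ => f i) c)} := by
        intro i hi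
        exact hall i (by exact_mod_cast hi)
      have hle := Set.encard_mono hsub
      rw [Set.encard_coe_eq_coe_finsetCard, hucard] at hle
      exact absurd h (not_lt.mpr hle)
    · exact Set.encard_lt_top_iff.mp (h.trans_le le_top)
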